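/- The multiclass Matthews Correlation Coefficient is not monotone for m = 3 classes: for the confusion matrices C1 = ((1,0,0),(6,1,0),(0,0,1)) and C2 = ((1,0,0),(7,0,0),(0,0,1)), where C1 is obtained from C2 by moving one element from the off-diagonal entry c21 to the diagonal entry c22 (which should strictly increase a monotone measure), we nevertheless have CC(C2) > CC(C1). -/

import Mathlib

/-- Multiclass Matthews Correlation Coefficient of an m×m confusion matrix:
CC = (n·Σ_i c_ii − Σ_i a_i b_i)/√((n² − Σ_i b_i²)(n² − Σ_i a_i²)). -/
noncomputable def mccMat {m : ℕ} (C : Matrix (Fin m) (Fin m) ℝ) : ℝ :=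
  ((∑ i, ∑ j, C i j) * (∑ i, C i i) -
      ∑ i, (∑ j, C i j) * (∑ j, C j i)) /
    Real.sqrt (((∑ i, ∑ j, C i j) ^ 2 - ∑ i, (∑ j, C j i) ^ 2) *
               ((∑ i, ∑ j, C i j) ^ 2 - ∑ i, (∑ j, C i j) ^ 2))

/-- The multiclass CC is not monotone for m = 3: moving one element from the
off-diagonal entry c21 of C2 = ((1,0,0),(7,0,0),(0,0,1)) to the diagonal entry c22
gives C1 = ((1,0,0),(6,1,0),(0,0,1)), yet CC(C2) > CC(C1). -/
theorem mcc_not_monotone :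
    mccMat !![(1:ℝ), 0, 0; 6, 1, 0; 0, 0, 1] <
      mccMat !![(1:ℝ), 0, 0; 7, 0, 0; 0, 0, 1] := by
  unfold mccMat
  norm_num [Fin.sum_univ_three, Matrix.vecHead, Matrix.vecTail, Matrix.cons_val_two]
  rw [show (2/5:ℝ) = 12/30 by norm_num]
  have h480 : (0:ℝ) < Real.sqrt 480 := Real.sqrt_pos.mpr (by norm_num)
  have hlt : Real.sqrt 480 < (45/2) := by
    rw [show ((45/2):ℝ) = Real.sqrt ((45/2)^2) by rw [Real.sqrt_sq]; norm_num]
    exact Real.sqrt_lt_sqrt (by norm_num) (by norm_num)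
  calc (12:ℝ)/30 = 9/(45/2) := by norm_num
    _ < 9 / Real.sqrt 480 := by apply div_lt_div_of_pos_left <;> norm_num [h480, hlt]
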